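/- Let p ≥ 1 be a real number. For every x in the closed interval [0,1], the function a(x) := (1/2)·x·(1 - x^p)^(1/p) + ∫_x^1 (1 - t^p)^(1/p) dt (the area of the p-circle sector from (1,0) to the point (x, (1-x^p)^(1/p))) satisfies a(x) = (1/2) ∫_x^1 (1 - t^p)^(1/p - 1) dt. -/

import Mathlib

open Real intervalIntegral

/-- The area of the p-circle sector from `(1,0)` to `(x, (1-x^p)^(1/p))`,
namely `a(x) = (1/2) x (1-x^p)^(1/p) + ∫_x^1 (1-t^p)^(1/p) dt`, equals
`(1/2) ∫_x^1 (1-t^p)^(1/p - 1) dt`. -/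
theorem sector_area_eq (p : ℝ) (hp : 1 ≤ p) :
    ∀ x ∈ Set.Icc (0 : ℝ) 1,
      (1 / 2) * x * (1 - x ^ p) ^ (1 / p) + (∫ t in x..1, (1 - t ^ p) ^ (1 / p))
        = (1 / 2) * ∫ t in x..1, (1 - t ^ p) ^ (1 / p - 1) := by
  have hp0 : 0 < p := lt_of_lt_of_le one_pos hp
  rintro x ⟨hx0, hx1⟩
  set f : ℝ → ℝ := fun t => (1 - t ^ p) ^ (1 / p) with hf
  set g : ℝ → ℝ := fun t => t ^ p * (1 - t ^ p) ^ (1 / p - 1) with hg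
  have hcont_pow : Continuous fun t : ℝ => t ^ p :=
    continuous_iff_continuousAt.mpr fun t => Real.continuousAt_rpow_const t p (Or.inr hp0.le)
  have hf_cont : Continuous f := by
    apply continuous_iff_continuousAt.mpr
    intro t
    exact (Real.continuousAt_rpow_const _ _ (Or.inr (by positivity))).comp
      ((continuous_const.sub hcont_pow).continuousAt)
  have hfi : IntervalIntegrable f MeasureTheory.volume x 1 := hf_cont.intervalIntegrable x 1
  have hple : ∀ t : ℝ, 0 ≤ t → t ≤ 1 → t ^ p ≤ t := by
    intro t ht0 ht1
    rcases eq_or_lt_of_le ht0 with h | h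
    · simp [← h, Real.zero_rpow hp0.ne']
    · calc t ^ p ≤ t ^ (1 : ℝ) := Real.rpow_le_rpow_of_exponent_ge h ht1 hp
        _ = t := Real.rpow_one t
  have hgi : IntervalIntegrable g MeasureTheory.volume x 1 := by
    have hdom : IntervalIntegrable (fun t : ℝ => (1 - t) ^ (1 / p - 1))
        MeasureTheory.volume x 1 := by
      have h1 : IntervalIntegrable (fun t : ℝ => t ^ (1 / p - 1)) MeasureTheory.volume 0 (1 - x) :=
        intervalIntegrable_rpow' (by have := one_div_pos.mpr hp0; linarith)
      have h2 := (h1.comp_sub_left 1).symm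
      simpa using h2
    apply hdom.mono_fun'
    · apply Measurable.aestronglyMeasurable
      measurability
    · filter_upwards [MeasureTheory.ae_restrict_mem measurableSet_uIoc] with t ht
      rw [Set.uIoc_of_le hx1] at ht
      obtain ⟨ht0, ht1⟩ := ht
      have ht0' : 0 < t := lt_of_le_of_lt hx0 ht0
      rcases eq_or_lt_of_le ht1 with h | h
      · simp only [hg, h, Real.one_rpow, one_mul, sub_self]
        rw [Real.norm_of_nonneg (Real.rpow_nonneg le_rfl _)]
      · have hu : 0 < 1 - t ^ p := by
          have h2 : t ^ p < 1 := lt_of_le_of_lt (hple t ht0'.le ht1) h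
          linarith
        have hv : 0 < 1 - t := by linarith
        have hvu : 1 - t ≤ 1 - t ^ p := by have := hple t ht0'.le ht1; linarith
        have h1 : (1 - t ^ p) ^ (1 / p - 1) ≤ (1 - t) ^ (1 / p - 1) :=
          Real.rpow_le_rpow_of_nonpos hv hvu
            (by have := one_div_pos.mpr hp0; have := (div_le_one hp0).mpr hp; linarith)
        have htp1 : t ^ p ≤ 1 := (hple t ht0'.le ht1).trans ht1
        have hg_nonneg : 0 ≤ g t := by
          apply mul_nonneg (Real.rpow_nonneg ht0'.le _) (Real.rpow_nonneg hu.le _)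
        rw [Real.norm_of_nonneg hg_nonneg]
        calc g t ≤ 1 * (1 - t ^ p) ^ (1 / p - 1) :=
              mul_le_mul_of_nonneg_right htp1 (Real.rpow_nonneg hu.le _)
          _ = (1 - t ^ p) ^ (1 / p - 1) := one_mul _
          _ ≤ (1 - t) ^ (1 / p - 1) := h1
  -- FTC: ∫ (f - g) = -(x * f x)
  have hFTC : (∫ t in x..1, (f t - g t)) = -(x * f x) := by
    have key := intervalIntegral.integral_eq_sub_of_hasDerivAt_of_le hx1
      (f := fun t => t * f t) (f' := fun t => f t - g t)
      (by fun_prop)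
      ?_ (hfi.sub hgi)
    · rw [key]
      simp [hf, Real.one_rpow, Real.zero_rpow hp0.ne',
        Real.zero_rpow (one_div_pos.mpr hp0).ne',
        Real.zero_rpow (inv_ne_zero hp0.ne')]
    · intro t ht
      obtain ⟨ht0, ht1⟩ := ht
      have ht0' : 0 < t := lt_of_le_of_lt hx0 ht0
      have htp : t ^ p < 1 := lt_of_le_of_lt (hple t ht0'.le ht1.le) ht1
      have hu : 0 < 1 - t ^ p := by linarith
      have h1 : HasDerivAt (fun t : ℝ => t ^ p) (p * t ^ (p - 1)) t :=
        Real.hasDerivAt_rpow_const (Or.inl ht0'.ne')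
      have h2 : HasDerivAt (fun t : ℝ => 1 - t ^ p) (-(p * t ^ (p - 1))) t := h1.const_sub 1
      have h3 : HasDerivAt f ((-(p * t ^ (p - 1))) * (1 / p) * (1 - t ^ p) ^ (1 / p - 1)) t :=
        h2.rpow_const (Or.inl hu.ne')
      have h4 := (hasDerivAt_id t).mul h3
      convert h4 using 1
      · rfl
      · rfl
      have htt : t * (p * t ^ (p - 1)) * (1 / p) = t ^ p := by
        have h5 : t * t ^ (p - 1) = t ^ p := by
          nth_rewrite 1 [← Real.rpow_one t]
          rw [← Real.rpow_add ht0']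
          ring_nf
        have hpp : p * (1 / p) = 1 := mul_one_div_cancel hp0.ne'
        calc t * (p * t ^ (p - 1)) * (1 / p) = (t * t ^ (p - 1)) * (p * (1 / p)) := by ring
          _ = t ^ p * 1 := by rw [h5, hpp]
          _ = t ^ p := mul_one _
      simp only [hf, hg, id_eq, one_mul]
      linear_combination ((1 - t ^ p) ^ (1 / p - 1) : ℝ) * htt
  have hsub := intervalIntegral.integral_sub hfi hgi
  rw [hsub] at hFTC
  -- pointwise identity
  have hid : (∫ t in x..1, (1 - t ^ p) ^ (1 / p - 1)) = (∫ t in x..1, f t) + ∫ t in x..1, g t := by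
    rw [← intervalIntegral.integral_add hfi hgi]
    apply intervalIntegral.integral_congr
    intro t ht
    rw [Set.uIcc_of_le hx1] at ht
    obtain ⟨ht0, ht1⟩ := ht
    have ht0' : 0 ≤ t := hx0.trans ht0
    simp only [hf, hg, Pi.add_apply]
    rcases eq_or_lt_of_le ((hple t ht0' ht1).trans ht1) with h | h
    · rw [h]
      simp [Real.zero_rpow (one_div_pos.mpr hp0).ne', Real.zero_rpow (inv_ne_zero hp0.ne')]
    · have hu : 0 < 1 - t ^ p := by linarith
      have key : (1 - t ^ p) ^ (1 / p) = (1 - t ^ p) ^ (1 / p - 1) * (1 - t ^ p) := by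
        have h6 := Real.rpow_add hu (1 / p - 1) 1
        rw [Real.rpow_one] at h6
        rw [show (1 / p - 1 + 1 : ℝ) = 1 / p from by ring] at h6
        exact h6
      rw [key]; ring
  rw [hid]
  linarith [hFTC]
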